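/- Let a = (a_1,…,a_m) and b = (b_1,…,b_t) be compositions of n with a_1 = 2b_1 (Block Elimination); note b_1 < n, so t ≥ 2. Set a' = (b_1, a_2,…,a_m) and b' = (b_2,…,b_t), which are compositions of n − b_1. Then M(a|b) and M(a'|b') have the same number of cycle components and the same number of path components; in particular ind(a,b) = ind(a',b'). -/

import Mathlib

open scoped Classical

/-- Vertices `j` and `k` of `{1,…,n}` (encoded as `Fin n`, vertex `v` is `v+1`) are joined by
an edge determined by the composition `a`. -/
def CompEdge {n : ℕ} (a : Composition n) (j k : Fin n) : Prop :=
  j ≠ k ∧ ∃ i : Fin a.length,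
    a.sizeUpTo i < (j : ℕ) + 1 ∧ (j : ℕ) + 1 ≤ a.sizeUpTo (i + 1) ∧
    a.sizeUpTo i < (k : ℕ) + 1 ∧ (k : ℕ) + 1 ≤ a.sizeUpTo (i + 1) ∧
    ((j : ℕ) + 1) + ((k : ℕ) + 1) = 2 * a.sizeUpTo i + a.blocksFun i + 1

lemma CompEdge.symm {n : ℕ} {a : Composition n} {j k : Fin n} (h : CompEdge a j k) :
    CompEdge a k j := by
  obtain ⟨hne, i, h1, h2, h3, h4, h5⟩ := h
  exact ⟨hne.symm, i, h3, h4, h1, h2, by omega⟩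

/-- The meander `M(a|b)` of the pair of compositions `(a, b)` of `n`. -/
def Meander {n : ℕ} (a b : Composition n) : SimpleGraph (Fin n) where
  Adj j k := CompEdge a j k ∨ CompEdge b j k
  symm := by
    constructor
    intro j k h
    rcases h with h | h
    · exact Or.inl h.symm
    · exact Or.inr h.symm
  loopless := by
    constructor
    intro j h
    rcases h with ⟨hne, _⟩ | ⟨hne, _⟩ <;> exact hne rfl

/-- A connected component of the meander is a cycle if each of its vertices is incident
to both a top edge and a bottom edge. -/
def IsCycleComp {n : ℕ} (a b : Composition n) (c : (Meander a b).ConnectedComponent) : Prop :=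
  ∀ v : Fin n, (Meander a b).connectedComponentMk v = c →
    (∃ w, CompEdge a v w) ∧ (∃ w, CompEdge b v w)

/-- The number of cycle components of the meander `M(a|b)`. -/
noncomputable def cycleCount {n : ℕ} (a b : Composition n) : ℕ :=
  Nat.card {c : (Meander a b).ConnectedComponent // IsCycleComp a b c}

/-- The number of path components of the meander `M(a|b)`. -/
noncomputable def pathCount {n : ℕ} (a b : Composition n) : ℕ :=
  Nat.card {c : (Meander a b).ConnectedComponent // ¬ IsCycleComp a b c}

/-- The index `ind(a,b) = 2C + P - 1` of a pair of compositions of `n`. -/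
noncomputable def seaweedInd {n : ℕ} (a b : Composition n) : ℕ :=
  2 * cycleCount a b + pathCount a b - 1

/-- `C(n,k)`: the number of ordered pairs of compositions of `n` of index `k`. -/
noncomputable def Cnk (n k : ℕ) : ℕ :=
  Nat.card {p : Composition n × Composition n // seaweedInd p.1 p.2 = k}

lemma compEdge_iff {n : ℕ} (c : Composition n) (j k : Fin n) :
    CompEdge c j k ↔ j ≠ k ∧ ∃ i : ℕ, i < c.length ∧
      c.sizeUpTo i < (j:ℕ)+1 ∧ (j:ℕ)+1 ≤ c.sizeUpTo (i+1) ∧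
      c.sizeUpTo i < (k:ℕ)+1 ∧ (k:ℕ)+1 ≤ c.sizeUpTo (i+1) ∧
      ((j:ℕ)+1) + ((k:ℕ)+1) = c.sizeUpTo i + c.sizeUpTo (i+1) + 1 := by
  constructor
  · rintro ⟨hne, i, h1, h2, h3, h4, h5⟩
    refine ⟨hne, i, i.isLt, h1, h2, h3, h4, ?_⟩
    have := c.sizeUpTo_succ' i
    omega
  · rintro ⟨hne, i, hi, h1, h2, h3, h4, h5⟩
    refine ⟨hne, ⟨i, hi⟩, h1, h2, h3, h4, ?_⟩
    have := c.sizeUpTo_succ' ⟨i, hi⟩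
    simp only [Fin.val_mk] at this ⊢
    omega

theorem block_elimination (n : ℕ) (a b : Composition n) (a₁ b₁ : ℕ) (as bs : List ℕ)
    (ha : a.blocks = a₁ :: as) (hb : b.blocks = b₁ :: bs)
    (h₁ : a₁ = 2 * b₁)
    (a' b' : Composition (n - b₁))
    (ha' : a'.blocks = b₁ :: as) (hb' : b'.blocks = bs) :
    cycleCount a b = cycleCount a' b' ∧ pathCount a b = pathCount a' b' ∧
      seaweedInd a b = seaweedInd a' b' := by
  subst h₁
  have hb1 : 0 < b₁ := b.blocks_pos (by rw [hb]; exact List.mem_cons_self)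
  have hsum : 2 * b₁ + as.sum = n := by
    have := a.blocks_sum; rw [ha] at this; simpa using this
  have hsum' : b₁ + as.sum = n - b₁ := by
    have := a'.blocks_sum; rw [ha'] at this; simpa using this
  have SA : ∀ i : ℕ, a.sizeUpTo (i+1) = 2*b₁ + (as.take i).sum := by
    intro i; simp [Composition.sizeUpTo, ha]
  have SA' : ∀ i : ℕ, a'.sizeUpTo (i+1) = b₁ + (as.take i).sum := by
    intro i; simp [Composition.sizeUpTo, ha']
  have SB : ∀ i : ℕ, b.sizeUpTo (i+1) = b₁ + (bs.take i).sum := by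
    intro i; simp [Composition.sizeUpTo, hb]
  have SB' : ∀ i : ℕ, b'.sizeUpTo i = (bs.take i).sum := by
    intro i; simp [Composition.sizeUpTo, hb']
  have LA : a.length = as.length + 1 := by simp [Composition.length, ha]
  have LA' : a'.length = as.length + 1 := by simp [Composition.length, ha']
  have LB : b.length = bs.length + 1 := by simp [Composition.length, hb]
  have LB' : b'.length = bs.length := by simp [Composition.length, hb']
  -- the folding maps
  have hflt : ∀ w : Fin (n - b₁), (w:ℕ) + b₁ < n := by
    intro w; have := w.isLt; omega
  set f : Fin (n - b₁) → Fin n := fun w => ⟨(w:ℕ) + b₁, hflt w⟩ with hf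
  have fval : ∀ w, ((f w : Fin n) : ℕ) = (w:ℕ) + b₁ := fun _ => rfl
  have hg1 : ∀ v : Fin n, b₁ - 1 - (v:ℕ) < n - b₁ := by intro v; omega
  have hg2 : ∀ v : Fin n, ¬ ((v:ℕ) < b₁) → (v:ℕ) - b₁ < n - b₁ := by
    intro v hv; have := v.isLt; omega
  set g : Fin n → Fin (n - b₁) := fun v =>
    if h : (v:ℕ) < b₁ then ⟨b₁ - 1 - (v:ℕ), hg1 v⟩ else ⟨(v:ℕ) - b₁, hg2 v h⟩ with hgdef
  have gval_small : ∀ v : Fin n, (v:ℕ) < b₁ → ((g v : Fin (n-b₁)) : ℕ) = b₁ - 1 - (v:ℕ) := by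
    intro v h; rw [hgdef]; simp only [dif_pos h]
  have gval_big : ∀ v : Fin n, b₁ ≤ (v:ℕ) → ((g v : Fin (n-b₁)) : ℕ) = (v:ℕ) - b₁ := by
    intro v h; rw [hgdef]; simp only [dif_neg (not_lt.mpr h)]
  have hgf : ∀ w, g (f w) = w := by
    intro w
    apply Fin.ext
    rw [gval_big _ (by rw [fval]; omega), fval]
    omega
  have hfg_big : ∀ v : Fin n, b₁ ≤ (v:ℕ) → f (g v) = v := by
    intro v hv
    apply Fin.ext
    rw [fval, gval_big _ hv]
    have := v.isLt; omega
  -- edge transfer lemmas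
  have T1 : ∀ w w' : Fin (n - b₁),
      CompEdge a (f w) (f w') ↔ (CompEdge a' w w' ∧ (w:ℕ) + (w':ℕ) + 1 ≠ b₁) := by
    intro w w'
    rw [compEdge_iff, compEdge_iff]
    simp only [fval]
    constructor
    · rintro ⟨hne, i, hi, h1, h2, h3, h4, h5⟩
      have hne' : w ≠ w' := fun h => hne (by rw [h])
      rcases i with _ | i
      · simp only [Composition.sizeUpTo_zero, SA, List.take_zero, List.sum_nil] at h5
        omega
      · simp only [SA] at h1 h2 h3 h4 h5
        refine ⟨⟨hne', i+1, by omega, ?_, ?_, ?_, ?_, ?_⟩, by omega⟩ <;>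
          simp only [SA'] <;> omega
    · rintro ⟨⟨hne, i, hi, h1, h2, h3, h4, h5⟩, hs⟩
      have hne' : f w ≠ f w' := fun h => hne (by
        apply Fin.ext
        have := congrArg Fin.val h
        simp only [fval] at this
        omega)
      rcases i with _ | i
      · simp only [Composition.sizeUpTo_zero, SA', List.take_zero, List.sum_nil] at h2 h4 h5
        omega
      · simp only [SA'] at h1 h2 h3 h4 h5
        refine ⟨hne', i+1, by omega, ?_, ?_, ?_, ?_, ?_⟩ <;>
          simp only [SA] <;> omega
  have T2 : ∀ w w' : Fin (n - b₁),
      CompEdge b (f w) (f w') ↔ CompEdge b' w w' := by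
    intro w w'
    rw [compEdge_iff, compEdge_iff]
    simp only [fval]
    constructor
    · rintro ⟨hne, i, hi, h1, h2, h3, h4, h5⟩
      have hne' : w ≠ w' := fun h => hne (by rw [h])
      rcases i with _ | i
      · simp only [Composition.sizeUpTo_zero, SB, List.take_zero, List.sum_nil] at h2
        omega
      · simp only [SB] at h1 h2 h3 h4 h5
        refine ⟨hne', i, by omega, ?_, ?_, ?_, ?_, ?_⟩ <;>
          simp only [SB'] <;> omega
    · rintro ⟨hne, i, hi, h1, h2, h3, h4, h5⟩
      have hne' : f w ≠ f w' := fun h => hne (by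
        apply Fin.ext
        have := congrArg Fin.val h
        simp only [fval] at this
        omega)
      simp only [SB'] at h1 h2 h3 h4 h5
      refine ⟨hne', i+1, by omega, ?_, ?_, ?_, ?_, ?_⟩ <;>
        simp only [SB] <;> omega
  have edgeA_small : ∀ j k : Fin n, (j:ℕ) < b₁ →
      (CompEdge a j k ↔ (j:ℕ) + (k:ℕ) + 1 = 2*b₁) := by
    intro j k hj
    rw [compEdge_iff]
    constructor
    · rintro ⟨hne, i, hi, h1, h2, h3, h4, h5⟩
      rcases i with _ | i
      · simp only [Composition.sizeUpTo_zero, SA, List.take_zero, List.sum_nil] at h5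
        omega
      · simp only [SA] at h1
        omega
    · intro hs
      have hne : j ≠ k := fun h => by
        rw [h] at hs hj
        omega
      refine ⟨hne, 0, by omega, ?_⟩
      simp only [Composition.sizeUpTo_zero, SA, List.take_zero, List.sum_nil]
      omega
  have edgeB_small : ∀ j k : Fin n, (j:ℕ) < b₁ →
      (CompEdge b j k ↔ (j ≠ k ∧ (j:ℕ) + (k:ℕ) + 1 = b₁)) := by
    intro j k hj
    rw [compEdge_iff]
    constructor
    · rintro ⟨hne, i, hi, h1, h2, h3, h4, h5⟩
      refine ⟨hne, ?_⟩
      rcases i with _ | i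
      · simp only [Composition.sizeUpTo_zero, SB, List.take_zero, List.sum_nil] at h5
        omega
      · simp only [SB] at h1
        omega
    · rintro ⟨hne, hs⟩
      refine ⟨hne, 0, by omega, ?_⟩
      simp only [Composition.sizeUpTo_zero, SB, List.take_zero, List.sum_nil]
      omega
  have edgeA'_small : ∀ w u : Fin (n - b₁), (w:ℕ) < b₁ →
      (CompEdge a' w u ↔ (w ≠ u ∧ (w:ℕ) + (u:ℕ) + 1 = b₁)) := by
    intro w u hw
    rw [compEdge_iff]
    constructor
    · rintro ⟨hne, i, hi, h1, h2, h3, h4, h5⟩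
      refine ⟨hne, ?_⟩
      rcases i with _ | i
      · simp only [Composition.sizeUpTo_zero, SA', List.take_zero, List.sum_nil] at h5
        omega
      · simp only [SA'] at h1
        omega
    · rintro ⟨hne, hs⟩
      refine ⟨hne, 0, by omega, ?_⟩
      simp only [Composition.sizeUpTo_zero, SA', List.take_zero, List.sum_nil]
      omega
  have edgeA_cases : ∀ j k : Fin n, CompEdge a j k →
      ((j:ℕ) + (k:ℕ) + 1 = 2*b₁ ∨ (2*b₁ ≤ (j:ℕ) ∧ 2*b₁ ≤ (k:ℕ))) := by
    intro j k h
    rw [compEdge_iff] at h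
    obtain ⟨hne, i, hi, h1, h2, h3, h4, h5⟩ := h
    rcases i with _ | i
    · simp only [Composition.sizeUpTo_zero, SA, List.take_zero, List.sum_nil] at h5
      omega
    · simp only [SA] at h1 h3
      omega
  have bigB : ∀ j k : Fin n, b₁ ≤ (j:ℕ) → CompEdge b j k → b₁ ≤ (k:ℕ) := by
    intro j k hj h
    rw [compEdge_iff] at h
    obtain ⟨hne, i, hi, h1, h2, h3, h4, h5⟩ := h
    rcases i with _ | i
    · simp only [Composition.sizeUpTo_zero, SB, List.take_zero, List.sum_nil] at h2
      omega
    · simp only [SB] at h3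
      omega
  -- degree lemmas
  have dA_small : ∀ v : Fin n, (v:ℕ) < b₁ → ∃ w, CompEdge a v w := by
    intro v hv
    refine ⟨⟨2*b₁ - 1 - (v:ℕ), by omega⟩, ?_⟩
    rw [edgeA_small _ _ hv]
    simp only [Fin.val_mk]
    omega
  have dA_mid : ∀ v : Fin n, b₁ ≤ (v:ℕ) → (v:ℕ) < 2*b₁ → ∃ w, CompEdge a v w := by
    intro v h1 h2
    refine ⟨⟨2*b₁ - 1 - (v:ℕ), by omega⟩, ?_⟩
    have : CompEdge a (⟨2*b₁ - 1 - (v:ℕ), by omega⟩ : Fin n) v := by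
      rw [edgeA_small _ _ (by simp only [Fin.val_mk]; omega)]
      simp only [Fin.val_mk]
      omega
    exact this.symm
  have dB_small : ∀ v : Fin n, (v:ℕ) < b₁ →
      ((∃ w, CompEdge b v w) ↔ 2*(v:ℕ) + 1 ≠ b₁) := by
    intro v hv
    constructor
    · rintro ⟨k, hk⟩ hs
      rw [edgeB_small _ _ hv] at hk
      obtain ⟨hne, hsum2⟩ := hk
      exact hne (Fin.ext (by omega))
    · intro hs
      refine ⟨⟨b₁ - 1 - (v:ℕ), by omega⟩, ?_⟩
      rw [edgeB_small _ _ hv]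
      constructor
      · intro h
        have := congrArg Fin.val h
        simp only [Fin.val_mk] at this
        omega
      · simp only [Fin.val_mk]
        omega
  have dA'_small : ∀ w : Fin (n - b₁), (w:ℕ) < b₁ →
      ((∃ u, CompEdge a' w u) ↔ 2*(w:ℕ) + 1 ≠ b₁) := by
    intro w hw
    constructor
    · rintro ⟨k, hk⟩ hs
      rw [edgeA'_small _ _ hw] at hk
      obtain ⟨hne, hsum2⟩ := hk
      exact hne (Fin.ext (by omega))
    · intro hs
      refine ⟨⟨b₁ - 1 - (w:ℕ), by omega⟩, ?_⟩
      rw [edgeA'_small _ _ hw]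
      constructor
      · intro h
        have := congrArg Fin.val h
        simp only [Fin.val_mk] at this
        omega
      · simp only [Fin.val_mk]
        omega
  have dA_big : ∀ v : Fin n, 2*b₁ ≤ (v:ℕ) →
      ((∃ w, CompEdge a v w) ↔ ∃ u, CompEdge a' (g v) u) := by
    intro v hv
    have hvb : b₁ ≤ (v:ℕ) := by omega
    constructor
    · rintro ⟨k, hk⟩
      have hkb : b₁ ≤ (k:ℕ) := by
        rcases edgeA_cases v k hk with hs | ⟨_, h2⟩ <;> omega
      refine ⟨g k, ?_⟩
      have : CompEdge a (f (g v)) (f (g k)) := by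
        rw [hfg_big v hvb, hfg_big k hkb]; exact hk
      exact ((T1 _ _).mp this).1
    · rintro ⟨u, hu⟩
      refine ⟨f u, ?_⟩
      have hs : ((g v):ℕ) + (u:ℕ) + 1 ≠ b₁ := by
        rw [gval_big v hvb]; omega
      have := (T1 (g v) u).mpr ⟨hu, hs⟩
      rwa [hfg_big v hvb] at this
  have dB_big : ∀ v : Fin n, b₁ ≤ (v:ℕ) →
      ((∃ w, CompEdge b v w) ↔ ∃ u, CompEdge b' (g v) u) := by
    intro v hv
    constructor
    · rintro ⟨k, hk⟩
      have hkb : b₁ ≤ (k:ℕ) := bigB v k hv hk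
      refine ⟨g k, ?_⟩
      have : CompEdge b (f (g v)) (f (g k)) := by
        rw [hfg_big v hv, hfg_big k hkb]; exact hk
      exact (T2 _ _).mp this
    · rintro ⟨u, hu⟩
      refine ⟨f u, ?_⟩
      have := (T2 (g v) u).mpr hu
      rwa [hfg_big v hv] at this
  -- reachability transfer
  have hfadj : ∀ w w' : Fin (n - b₁), (Meander a' b').Adj w w' →
      (Meander a b).Reachable (f w) (f w') := by
    intro w w' hadj
    rcases hadj with h | h
    · by_cases hw : (w:ℕ) < b₁
      · rw [edgeA'_small _ _ hw] at h
        obtain ⟨hne, hs⟩ := h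
        have hu' : (w':ℕ) < n := by omega
        have hu : (w:ℕ) < n := by omega
        have hvne : (w:ℕ) ≠ (w':ℕ) := fun h => hne (Fin.ext h)
        have e1 : CompEdge a (⟨(w':ℕ), hu'⟩ : Fin n) (f w) := by
          rw [edgeA_small _ _ (by simp only [Fin.val_mk]; omega)]
          rw [fval]
          simp only [Fin.val_mk]
          omega
        have e2 : CompEdge b (⟨(w':ℕ), hu'⟩ : Fin n) (⟨(w:ℕ), hu⟩ : Fin n) := by
          rw [edgeB_small _ _ (by simp only [Fin.val_mk]; omega)]
          exact ⟨fun h => hvne (by simpa using (congrArg Fin.val h).symm),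
            by simp only [Fin.val_mk]; omega⟩
        have e3 : CompEdge a (⟨(w:ℕ), hu⟩ : Fin n) (f w') := by
          rw [edgeA_small _ _ (by simp only [Fin.val_mk]; omega)]
          rw [fval]
          simp only [Fin.val_mk]
          omega
        exact (SimpleGraph.Adj.reachable (Or.inl e1.symm)).trans
          ((SimpleGraph.Adj.reachable (Or.inr e2)).trans
            (SimpleGraph.Adj.reachable (Or.inl e3)))
      · push_neg at hw
        have hs : (w:ℕ) + (w':ℕ) + 1 ≠ b₁ := by omega
        exact SimpleGraph.Adj.reachable (Or.inl ((T1 w w').mpr ⟨h, hs⟩))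
    · exact SimpleGraph.Adj.reachable (Or.inr ((T2 w w').mpr h))
  have hgadj : ∀ v v' : Fin n, (Meander a b).Adj v v' →
      (Meander a' b').Reachable (g v) (g v') := by
    intro v v' hadj
    rcases hadj with h | h
    · rcases edgeA_cases v v' h with hs | ⟨hv, hv'⟩
      · rcases lt_or_ge (v:ℕ) b₁ with hv | hv
        · have : g v = g v' := Fin.ext (by
            rw [gval_small _ hv, gval_big _ (by omega)]; omega)
          rw [this]
        · have hv'2 : (v':ℕ) < b₁ := by omega
          have : g v = g v' := Fin.ext (by
            rw [gval_big _ hv, gval_small _ hv'2]; omega)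
          rw [this]
      · have : CompEdge a (f (g v)) (f (g v')) := by
          rw [hfg_big v (by omega), hfg_big v' (by omega)]; exact h
        exact SimpleGraph.Adj.reachable (Or.inl ((T1 _ _).mp this).1)
    · by_cases hv : (v:ℕ) < b₁
      · obtain ⟨hne, hs⟩ := (edgeB_small _ _ hv).mp h
        have hv' : (v':ℕ) < b₁ := by omega
        refine SimpleGraph.Adj.reachable (Or.inl ?_)
        rw [edgeA'_small _ _ (by rw [gval_small _ hv]; omega)]
        constructor
        · intro hc
          have := congrArg Fin.val hc
          rw [gval_small _ hv, gval_small _ hv'] at this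
          exact hne (Fin.ext (by omega))
        · rw [gval_small _ hv, gval_small _ hv']
          omega
      · push_neg at hv
        have hv' : b₁ ≤ (v':ℕ) := bigB v v' hv h
        have : CompEdge b (f (g v)) (f (g v')) := by
          rw [hfg_big v hv, hfg_big v' hv']; exact h
        exact SimpleGraph.Adj.reachable (Or.inr ((T2 _ _).mp this))
  have hfreach : ∀ w w' : Fin (n - b₁), (Meander a' b').Reachable w w' →
      (Meander a b).Reachable (f w) (f w') := by
    intro w w' h
    obtain ⟨p⟩ := h
    induction p with
    | nil => exact SimpleGraph.Reachable.refl _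
    | cons hadj p ih => exact (hfadj _ _ hadj).trans ih
  have hgreach : ∀ v v' : Fin n, (Meander a b).Reachable v v' →
      (Meander a' b').Reachable (g v) (g v') := by
    intro v v' h
    obtain ⟨p⟩ := h
    induction p with
    | nil => exact SimpleGraph.Reachable.refl _
    | cons hadj p ih => exact (hgadj _ _ hadj).trans ih
  have hfg : ∀ v : Fin n, (Meander a b).Reachable (f (g v)) v := by
    intro v
    rcases lt_or_ge (v:ℕ) b₁ with hv | hv
    · have e : CompEdge a v (f (g v)) := by
        rw [edgeA_small _ _ hv, fval, gval_small _ hv]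
        omega
      exact (SimpleGraph.Adj.reachable (Or.inl e)).symm
    · rw [hfg_big v hv]
  -- component maps
  let Φ : (Meander a' b').ConnectedComponent → (Meander a b).ConnectedComponent :=
    Quot.lift (fun w => (Meander a b).connectedComponentMk (f w))
      (fun w w' hr => SimpleGraph.ConnectedComponent.sound (hfreach w w' hr))
  let Ψ : (Meander a b).ConnectedComponent → (Meander a' b').ConnectedComponent :=
    Quot.lift (fun v => (Meander a' b').connectedComponentMk (g v))
      (fun v v' hr => SimpleGraph.ConnectedComponent.sound (hgreach v v' hr))
  have Φmk : ∀ w, Φ ((Meander a' b').connectedComponentMk w)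
      = (Meander a b).connectedComponentMk (f w) := fun _ => rfl
  have Ψmk : ∀ v, Ψ ((Meander a b).connectedComponentMk v)
      = (Meander a' b').connectedComponentMk (g v) := fun _ => rfl
  have hΨΦ : ∀ c', Ψ (Φ c') = c' := by
    intro c'
    refine SimpleGraph.ConnectedComponent.ind (fun w => ?_) c'
    rw [Φmk, Ψmk, hgf]
  have hΦΨ : ∀ c, Φ (Ψ c) = c := by
    intro c
    refine SimpleGraph.ConnectedComponent.ind (fun v => ?_) c
    rw [Ψmk, Φmk]
    exact SimpleGraph.ConnectedComponent.sound (hfg v)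
  have hmem : ∀ (c' : (Meander a' b').ConnectedComponent) (v : Fin n),
      ((Meander a b).connectedComponentMk v = Φ c' ↔
        (Meander a' b').connectedComponentMk (g v) = c') := by
    intro c' v
    constructor
    · intro h
      calc (Meander a' b').connectedComponentMk (g v)
          = Ψ ((Meander a b).connectedComponentMk v) := (Ψmk v).symm
        _ = Ψ (Φ c') := by rw [h]
        _ = c' := hΨΦ c'
    · intro h
      calc (Meander a b).connectedComponentMk v
          = Φ (Ψ ((Meander a b).connectedComponentMk v)) := (hΦΨ _).symm
        _ = Φ ((Meander a' b').connectedComponentMk (g v)) := by rw [Ψmk]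
        _ = Φ c' := by rw [h]
  have hcyc : ∀ c', (IsCycleComp a b (Φ c') ↔ IsCycleComp a' b' c') := by
    intro c'
    constructor
    · intro hc w hw
      have hv : (Meander a b).connectedComponentMk (f w) = Φ c' := by
        rw [hmem c' (f w), hgf w]
        exact hw
      obtain ⟨⟨ka, hA⟩, ⟨kb, hB⟩⟩ := hc (f w) hv
      constructor
      · rcases lt_or_ge (w:ℕ) b₁ with hsm | hbg
        · rw [dA'_small w hsm]
          intro hcontr
          have hu : (w:ℕ) < n := by omega
          have hmku : (Meander a b).connectedComponentMk ⟨(w:ℕ), hu⟩ = Φ c' := by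
            rw [hmem]
            have : g (⟨(w:ℕ), hu⟩ : Fin n) = w := Fin.ext (by
              rw [gval_small _ (by simpa using hsm)]
              simp only [Fin.val_mk]
              omega)
            rw [this]; exact hw
          obtain ⟨_, hB2⟩ := hc _ hmku
          have := (dB_small (⟨(w:ℕ), hu⟩ : Fin n) (by simpa using hsm)).mp hB2
          simp only [Fin.val_mk] at this
          omega
        · have h2 : 2*b₁ ≤ ((f w : Fin n):ℕ) := by rw [fval]; omega
          have := (dA_big (f w) h2).mp ⟨ka, hA⟩
          rwa [hgf w] at this
      · have := (dB_big (f w) (by rw [fval]; omega)).mp ⟨kb, hB⟩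
        rwa [hgf w] at this
    · intro hc' v hv
      have hgv : (Meander a' b').connectedComponentMk (g v) = c' := (hmem c' v).mp hv
      obtain ⟨⟨ua, hA'⟩, ⟨ub, hB'⟩⟩ := hc' (g v) hgv
      rcases lt_or_ge (v:ℕ) b₁ with hsm | hbg
      · refine ⟨dA_small v hsm, ?_⟩
        rw [dB_small v hsm]
        intro hcontr
        have hgvs : ((g v):ℕ) < b₁ := by rw [gval_small _ hsm]; omega
        have := (dA'_small (g v) hgvs).mp ⟨ua, hA'⟩
        rw [gval_small _ hsm] at this
        omega
      · refine ⟨?_, (dB_big v hbg).mpr ⟨ub, hB'⟩⟩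
        rcases lt_or_ge (v:ℕ) (2*b₁) with hm | hbig
        · exact dA_mid v hbg hm
        · exact (dA_big v hbig).mpr ⟨ua, hA'⟩
  let E : (Meander a' b').ConnectedComponent ≃ (Meander a b).ConnectedComponent :=
    ⟨Φ, Ψ, hΨΦ, hΦΨ⟩
  have hE : ∀ c', E c' = Φ c' := fun _ => rfl
  have hC : cycleCount a b = cycleCount a' b' := by
    unfold cycleCount
    exact Nat.card_congr
      (Equiv.subtypeEquiv E (fun c' => by rw [hE]; exact (hcyc c').symm)).symm
  have hP : pathCount a b = pathCount a' b' := by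
    unfold pathCount
    exact Nat.card_congr
      (Equiv.subtypeEquiv E (fun c' => by rw [hE]; exact not_congr (hcyc c').symm)).symm
  exact ⟨hC, hP, by unfold seaweedInd; rw [hC, hP]⟩
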